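/- Let X: (M^m, g) → R^n be an isometric immersion of a compact Riemannian manifold and ω a smooth p-form on M. Then the double commutator satisfies [[Δ_p, X_l], X_l]ω = −2|∇X_l|² ω for each component X_l of X. -/
import Mathlib


/-- Double commutator of the Hodge–de Rham Laplacian with multiplication by a component
`X_l` of an isometric immersion: `[[Δ_p, X_l], X_l]ω = −2|∇X_l|²ω`.

The geometric setting is axiomatized: `F` is the algebra of smooth functions, `Forms` the
`F`-module of smooth `p`-forms, `Δp` the Hodge–de Rham Laplacian, `Δ` the function Laplacian,
`DGrad f = ∇_{∇f}`, and `gradInner f g = ⟨∇f, ∇g⟩` (so `gradInner f f = |∇f|²`). We use the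
commutator formula `[Δ_p, f]ω = (Δf)ω − 2∇_{∇f}ω` and the derivation property of `∇_{∇f}`. -/
theorem hodge_double_commutator_multiplication
    {F Forms : Type*} [CommRing F] [AddCommGroup Forms] [Module F Forms]
    (Δp : Forms → Forms) (Δ : F → F) (DGrad : F → Forms → Forms)
    (gradInner : F → F → F)
    (hComm : ∀ (f : F) (ω : Forms),
      Δp (f • ω) - f • Δp ω = (Δ f) • ω - (2 : ℤ) • DGrad f ω)
    (hDerivation : ∀ (f g : F) (ω : Forms),
      DGrad f (g • ω) = (gradInner f g) • ω + g • DGrad f ω)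
    (Xl : F) (ω : Forms) :
    Δp (Xl • Xl • ω) - (2 : ℤ) • (Xl • Δp (Xl • ω)) + Xl • Xl • Δp ω
      = -((2 : ℤ) • ((gradInner Xl Xl) • ω)) := by
  have h1 := hComm Xl (Xl • ω)
  have h2 := hComm Xl ω
  have h3 := hDerivation Xl Xl ω
  rw [sub_eq_iff_eq_add] at h1 h2
  rw [h1, h3, h2]
  module
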